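/- Let 0 ≤ q ≤ 1 and m, n positive integers with n ≥ 2. Let M₁ have binomial distribution Bin(m,q) and let M₂ have Poisson distribution Po(m·q). Then the total variation distance between the distribution of G*(M₁) and the distribution of the Erdős–Rényi random graph G(n, 1 − exp(−m·q/binom(n,2))) equals the total variation distance between the distributions of G*(M₁) and G*(M₂), and is at most 2·d_TV(M₁, M₂), which is at most 2q. -/

import Mathlib

open scoped Classical
open Filter

noncomputable section

/-- The probability that `t` independent uniform samples (with repetition) from the
2-element subsets of `Fin n` yield exactly the graph `G`, where a pair is an edge iff
it is sampled at least once: the distribution of `G*(t)` for a deterministic `t`. -/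
def gstarGiven (n t : ℕ) (G : SimpleGraph (Fin n)) : ℝ :=
  (∑ f : Fin t → {e : Sym2 (Fin n) // ¬ e.IsDiag},
    if SimpleGraph.fromEdgeSet (Set.range (fun i => (f i : Sym2 (Fin n)))) = G
    then 1 else 0)
   / (Fintype.card {e : Sym2 (Fin n) // ¬ e.IsDiag} : ℝ) ^ t

/-- The distribution of the random graph `G*(M)`, where the number of samples is random
with probability mass function `M : ℕ → ℝ`. -/
def gstarDist (n : ℕ) (M : ℕ → ℝ) (G : SimpleGraph (Fin n)) : ℝ :=
  ∑' t, M t * gstarGiven n t G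

/-- The probability of the graph `G` under the Erdős–Rényi model `G(n, q)`, in which
each of the `n.choose 2` possible edges appears independently with probability `q`. -/
def erDist (n : ℕ) (q : ℝ) (G : SimpleGraph (Fin n)) : ℝ :=
  q ^ G.edgeSet.ncard * (1 - q) ^ (n.choose 2 - G.edgeSet.ncard)

/-- The binomial probability mass function `Bin(m, q)`. -/
def binomPmf (m : ℕ) (q : ℝ) (t : ℕ) : ℝ := (m.choose t : ℝ) * q ^ t * (1 - q) ^ (m - t)

/-- The Poisson probability mass function with mean `l`. -/
def poissonPmf (l : ℝ) (t : ℕ) : ℝ := Real.exp (-l) * l ^ t / (t.factorial : ℝ)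

/-- Total variation distance between two distributions on graphs on `Fin n`. -/
def graphTV {n : ℕ} (μ ν : SimpleGraph (Fin n) → ℝ) : ℝ :=
  ⨆ A : Set (SimpleGraph (Fin n)),
    |(∑ G : SimpleGraph (Fin n), if G ∈ A then μ G else 0) -
     (∑ G : SimpleGraph (Fin n), if G ∈ A then ν G else 0)|

/-- Total variation distance between two distributions on `ℕ`. -/
def natTV (μ ν : ℕ → ℝ) : ℝ :=
  ⨆ s : Set ℕ,
    |(∑' t : ℕ, if t ∈ s then μ t else 0) - (∑' t : ℕ, if t ∈ s then ν t else 0)|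

namespace GB
open Finset

/-! ### Poisson basics -/

lemma pois_nonneg {l : ℝ} (hl : 0 ≤ l) (t : ℕ) : 0 ≤ poissonPmf l t := by
  unfold poissonPmf; positivity

lemma hasSum_pois (l : ℝ) : HasSum (poissonPmf l) 1 := by
  have h := NormedSpace.expSeries_div_hasSum_exp (l : ℝ)
  rw [← Real.exp_eq_exp_ℝ] at h
  have h2 := h.mul_left (Real.exp (-l))
  have heq : (fun i => Real.exp (-l) * (l ^ i / (i.factorial:ℝ))) = poissonPmf l := by
    funext i; simp [poissonPmf, mul_div_assoc]
  rwa [heq, ← Real.exp_add, neg_add_cancel, Real.exp_zero] at h2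

lemma summable_pois (l : ℝ) : Summable (poissonPmf l) := (hasSum_pois l).summable

lemma tsum_pois (l : ℝ) : ∑' t, poissonPmf l t = 1 := (hasSum_pois l).tsum_eq

lemma pois_succ (l : ℝ) (j : ℕ) :
    l * poissonPmf l j = ((j : ℝ)+1) * poissonPmf l (j+1) := by
  have h : ((j+1 : ℕ).factorial : ℝ) = ((j:ℝ)+1) * (j.factorial : ℝ) := by
    rw [Nat.factorial_succ]; push_cast; ring
  have h0 : (j.factorial : ℝ) ≠ 0 := by positivity
  have h1 : ((j:ℝ)+1) ≠ 0 := by positivity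
  unfold poissonPmf
  rw [h, pow_succ]
  field_simp

lemma summable_ind {l : ℝ} (hl : 0 ≤ l) (s : Set ℕ) :
    Summable (fun j => if j ∈ s then poissonPmf l j else 0) := by
  apply Summable.of_nonneg_of_le (fun j => ?_) (fun j => ?_) (summable_pois l) <;>
    by_cases h : j ∈ s <;> simp [h, pois_nonneg hl]

/-! ### Stein setup -/

variable (lam : ℝ) (s : Set ℕ)

/-- partial sums of the indicated Poisson pmf -/
def pU (k : ℕ) : ℝ := ∑ j ∈ Finset.range (k+1), (if j ∈ s then poissonPmf lam j else 0)

/-- total mass of `s` under the Poisson pmf -/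
def pT : ℝ := ∑' j, (if j ∈ s then poissonPmf lam j else 0)

/-- the Stein solution -/
def steing : ℕ → ℝ
  | 0 => 0
  | (k+1) => Real.exp lam * (k.factorial : ℝ) *
      (pU lam s k - pT lam s * pU lam Set.univ k) / lam^(k+1)

lemma pU_univ (k : ℕ) : pU lam Set.univ k = ∑ j ∈ Finset.range (k+1), poissonPmf lam j := by
  simp [pU]

lemma pT_univ : pT lam Set.univ = 1 := by simp [pT, tsum_pois]

lemma pT_add_compl (hl : 0 ≤ lam) : pT lam s + pT lam sᶜ = 1 := by
  rw [pT, pT, ← Summable.tsum_add (summable_ind hl s) (summable_ind hl sᶜ)]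
  rw [← tsum_pois lam]
  congr 1; funext j
  by_cases h : j ∈ s <;> simp [h]

lemma pU_add_compl (k : ℕ) : pU lam s k + pU lam sᶜ k = pU lam Set.univ k := by
  rw [pU, pU, pU, ← Finset.sum_add_distrib]
  congr 1; funext j
  by_cases h : j ∈ s <;> simp [h]


lemma key_pois {lam : ℝ} (hl : lam ≠ 0) (k : ℕ) :
    Real.exp lam * (k.factorial : ℝ) * poissonPmf lam k / lam^k = 1 := by
  have h0 : (k.factorial : ℝ) ≠ 0 := by positivity
  have h1 : lam ^ k ≠ 0 := pow_ne_zero _ hl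
  unfold poissonPmf
  rw [Real.exp_neg]
  field_simp

lemma steing_succ (lam : ℝ) (s : Set ℕ) (k : ℕ) :
    steing lam s (k+1) = Real.exp lam * (k.factorial : ℝ) *
      (pU lam s k - pT lam s * pU lam Set.univ k) / lam^(k+1) := rfl

lemma stein_eq {lam : ℝ} (hl : 0 < lam) (s : Set ℕ) (k : ℕ) :
    lam * steing lam s (k+1) - k * steing lam s k
      = (if k ∈ s then 1 else 0) - pT lam s := by
  have hl0 : lam ≠ 0 := ne_of_gt hl
  cases k with
  | zero =>
      have hone0 : Real.exp lam * poissonPmf lam 0 = 1 := by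
        simp [poissonPmf, ← Real.exp_add]
      have hU : pU lam s 0 = (if 0 ∈ s then 1 else 0) * poissonPmf lam 0 := by
        by_cases h : 0 ∈ s <;> simp [pU, h]
      have hPc : pU lam Set.univ 0 = poissonPmf lam 0 := by simp [pU]
      rw [steing_succ, hU, hPc]
      simp only [Nat.cast_zero, zero_mul, sub_zero, Nat.factorial_zero, Nat.cast_one, zero_add, pow_one]
      calc lam * (Real.exp lam * 1 *
              ((if 0 ∈ s then 1 else 0) * poissonPmf lam 0
                - pT lam s * poissonPmf lam 0) / lam)
          = ((if 0 ∈ s then 1 else 0) - pT lam s) * (Real.exp lam * poissonPmf lam 0) := by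
            by_cases h : 0 ∈ s <;> simp only [h, if_true, if_false] <;> field_simp <;> ring
        _ = (if 0 ∈ s then 1 else 0) - pT lam s := by rw [hone0, mul_one]
  | succ k =>
      have hfac : (((k+1).factorial : ℕ) : ℝ) = ((k:ℝ)+1) * (k.factorial : ℝ) := by
        rw [Nat.factorial_succ]; push_cast; ring
      have hone : ((k:ℝ)+1) * (Real.exp lam * (k.factorial : ℝ)) * poissonPmf lam (k+1)
          / lam^(k+1) = 1 := by
        have h2 := key_pois hl0 (k+1)
        rw [hfac] at h2
        calc ((k:ℝ)+1) * (Real.exp lam * (k.factorial : ℝ)) * poissonPmf lam (k+1) / lam^(k+1)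
            = Real.exp lam * (((k:ℝ)+1) * (k.factorial : ℝ)) * poissonPmf lam (k+1)
              / lam^(k+1) := by ring_nf
          _ = 1 := h2
      have hU : pU lam s (k+1)
          = pU lam s k + (if (k+1) ∈ s then poissonPmf lam (k+1) else 0) := by
        rw [pU, pU, Finset.sum_range_succ]
      have hPc : pU lam Set.univ (k+1) = pU lam Set.univ k + poissonPmf lam (k+1) := by
        rw [pU, pU, Finset.sum_range_succ]; simp
      have hpne : lam ^ (k+1) ≠ 0 := pow_ne_zero _ hl0
      rw [steing_succ, steing_succ, hU, hPc, hfac]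
      have hpow : lam ^ (k+1+1) = lam ^ (k+1) * lam := by ring
      rw [hpow]
      push_cast
      calc lam * (Real.exp lam * (((k:ℝ)+1) * (k.factorial : ℝ)) *
              ((pU lam s k + (if (k+1) ∈ s then poissonPmf lam (k+1) else 0))
                - pT lam s * (pU lam Set.univ k + poissonPmf lam (k+1)))
              / (lam^(k+1) * lam))
          - ((k:ℝ)+1) * (Real.exp lam * (k.factorial : ℝ) *
              (pU lam s k - pT lam s * pU lam Set.univ k) / lam^(k+1))
          = ((if (k+1) ∈ s then 1 else 0) - pT lam s) *
              (((k:ℝ)+1) * (Real.exp lam * (k.factorial : ℝ)) * poissonPmf lam (k+1)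
                / lam^(k+1)) := by
            by_cases h : (k+1) ∈ s <;> simp only [h, if_true, if_false] <;>
              field_simp <;> ring
        _ = (if (k+1) ∈ s then 1 else 0) - pT lam s := by rw [hone, mul_one]


/-! ### Tail estimates -/

/-- Poisson tail -/
def pTl (lam : ℝ) (a : ℕ) : ℝ := ∑' j, poissonPmf lam (j + a)

lemma summable_shift (lam : ℝ) (a : ℕ) : Summable (fun j => poissonPmf lam (j + a)) :=
  (summable_nat_add_iff a).2 (summable_pois lam)

lemma one_sub_pU (lam : ℝ) (a : ℕ) : 1 - pU lam Set.univ a = pTl lam (a+1) := by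
  have h := Summable.sum_add_tsum_nat_add (f := poissonPmf lam) (a+1) (summable_pois lam)
  rw [tsum_pois] at h
  rw [pU_univ, pTl]
  linarith

lemma tail_est {lam : ℝ} (hl : 0 ≤ lam) (k : ℕ) :
    ((k:ℝ)+1) * pTl lam (k+2) ≤ lam * pTl lam (k+1) := by
  rw [pTl, pTl, ← tsum_mul_left, ← tsum_mul_left]
  apply Summable.tsum_le_tsum _ ((summable_shift lam (k+2)).mul_left _)
    ((summable_shift lam (k+1)).mul_left _)
  intro j
  have h := pois_succ lam (j + (k+1))
  have hidx : j + (k+1) + 1 = j + (k+2) := by omega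
  rw [hidx] at h
  rw [h]
  have : ((k:ℝ)+1) ≤ ((j + (k+1) : ℕ) : ℝ) + 1 := by push_cast; linarith [Nat.cast_nonneg (α := ℝ) j]
  exact mul_le_mul_of_nonneg_right this (pois_nonneg hl _) |>.trans_eq rfl

lemma D_nonneg {lam : ℝ} (hl : 0 ≤ lam) (k : ℕ) :
    0 ≤ ((k:ℝ)+1) * pU lam Set.univ (k+1) - lam * pU lam Set.univ k := by
  have h1 : lam * pU lam Set.univ k
      = ∑ j ∈ Finset.range (k+1), ((j:ℝ)+1) * poissonPmf lam (j+1) := by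
    rw [pU_univ, Finset.mul_sum]
    exact Finset.sum_congr rfl fun j _ => pois_succ lam j
  have h2 : ∑ j ∈ Finset.range (k+1), ((j:ℝ)+1) * poissonPmf lam (j+1)
      ≤ ∑ j ∈ Finset.range (k+1), ((k:ℝ)+1) * poissonPmf lam (j+1) := by
    apply Finset.sum_le_sum
    intro j hj
    rw [Finset.mem_range] at hj
    apply mul_le_mul_of_nonneg_right _ (pois_nonneg hl _)
    have : (j:ℝ) ≤ (k:ℝ) := by exact_mod_cast Nat.le_of_lt_succ hj
    linarith
  have h3 : ∑ j ∈ Finset.range (k+1), poissonPmf lam (j+1) ≤ pU lam Set.univ (k+1) := by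
    rw [pU_univ, Finset.sum_range_succ' _ (k+1)]
    have := pois_nonneg hl 0
    linarith
  rw [← Finset.mul_sum] at h2
  have h4 : ((k:ℝ)+1) * (∑ j ∈ Finset.range (k+1), poissonPmf lam (j+1))
      ≤ ((k:ℝ)+1) * pU lam Set.univ (k+1) := by
    apply mul_le_mul_of_nonneg_left h3 (by positivity)
  linarith

/-! ### The main estimate on increments of the Stein solution -/

lemma W_est {lam : ℝ} (hl : 0 < lam) (s : Set ℕ) (k : ℕ) :
    ((k:ℝ)+1) * pU lam s (k+1) - lam * pU lam s k
      - pT lam s * (((k:ℝ)+1) * pU lam Set.univ (k+1) - lam * pU lam Set.univ k)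
    ≤ ((k:ℝ)+1) * poissonPmf lam (k+1) := by
  set π := poissonPmf lam with hπ
  set D := ((k:ℝ)+1) * pU lam Set.univ (k+1) - lam * pU lam Set.univ k with hD
  have hDnn : 0 ≤ D := D_nonneg hl.le k
  set A : ℕ → ℝ := fun j => if j ∈ s then (if j ≤ k+1 then ((k:ℝ)+1) * π j else 0) else 0 with hA
  set B : ℕ → ℝ := fun j => if j ∈ s then (if j ≤ k then lam * π j else 0) else 0 with hB
  set Cc : ℕ → ℝ := fun j => if j ∈ s then D * π j else 0 with hC
  have sumA : Summable A := by
    apply summable_of_ne_finset_zero (s := Finset.range (k+2))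
    intro j hj
    rw [Finset.mem_range] at hj
    have : ¬ j ≤ k+1 := by omega
    by_cases h : j ∈ s <;> simp [hA, h, this]
  have sumB : Summable B := by
    apply summable_of_ne_finset_zero (s := Finset.range (k+1))
    intro j hj
    rw [Finset.mem_range] at hj
    have : ¬ j ≤ k := by omega
    by_cases h : j ∈ s <;> simp [hB, h, this]
  have hCeq : Cc = fun j => D * (if j ∈ s then π j else 0) := by
    funext j; by_cases h : j ∈ s <;> simp [hC, h]
  have sumC : Summable Cc := by rw [hCeq]; exact (summable_ind hl.le s).mul_left D
  have tA : ∑' j, A j = ((k:ℝ)+1) * pU lam s (k+1) := by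
    rw [tsum_eq_sum (s := Finset.range (k+2)) (fun j hj => by
      rw [Finset.mem_range] at hj
      have : ¬ j ≤ k+1 := by omega
      by_cases h : j ∈ s <;> simp [hA, h, this])]
    rw [pU, Finset.mul_sum]
    apply Finset.sum_congr rfl
    intro j hj
    rw [Finset.mem_range] at hj
    have hle : j ≤ k+1 := by omega
    by_cases h : j ∈ s <;> simp [hA, h, hle, hπ]
  have tB : ∑' j, B j = lam * pU lam s k := by
    rw [tsum_eq_sum (s := Finset.range (k+1)) (fun j hj => by
      rw [Finset.mem_range] at hj
      have : ¬ j ≤ k := by omega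
      by_cases h : j ∈ s <;> simp [hB, h, this])]
    rw [pU, Finset.mul_sum]
    apply Finset.sum_congr rfl
    intro j hj
    rw [Finset.mem_range] at hj
    have hle : j ≤ k := by omega
    by_cases h : j ∈ s <;> simp [hB, h, hle, hπ]
  have tC : ∑' j, Cc j = pT lam s * D := by
    rw [hCeq, tsum_mul_left, pT, mul_comm]
  have key : ((k:ℝ)+1) * pU lam s (k+1) - lam * pU lam s k - pT lam s * D
      = ∑' j, (A j - B j - Cc j) := by
    rw [Summable.tsum_sub (sumA.sub sumB) sumC, Summable.tsum_sub sumA sumB, tA, tB, tC]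
  rw [key]
  have bound : ∀ j, A j - B j - Cc j ≤ (if j = k+1 then ((k:ℝ)+1) * π (k+1) else 0) := by
    intro j
    have hπj : 0 ≤ π j := pois_nonneg hl.le j
    have hπk1 : 0 ≤ π (k+1) := pois_nonneg hl.le (k+1)
    by_cases hjs : j ∈ s
    · rcases lt_trichotomy j (k+1) with hlt | heq | hgt
      · have hle : j ≤ k+1 := by omega
        have hle' : j ≤ k := by omega
        have hne : j ≠ k+1 := by omega
        simp only [hA, hB, hC, hjs, if_true, hle, hle', hne, if_false]
        have htail : ((k:ℝ)+1) - lam - D ≤ 0 := by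
          have h1 := tail_est hl.le k
          have h2 := one_sub_pU lam (k+1)
          have h3 := one_sub_pU lam k
          rw [hD]
          nlinarith [h1, h2, h3]
        nlinarith [hπj, htail]
      · subst heq
        have hle : k+1 ≤ k+1 := le_refl _
        have hnle : ¬ (k+1 ≤ k) := by omega
        simp only [hA, hB, hC, hjs, if_true, hle, hnle, if_false]
        nlinarith [hπk1, hDnn]
      · have hnle : ¬ (j ≤ k+1) := by omega
        have hnle' : ¬ (j ≤ k) := by omega
        have hne : j ≠ k+1 := by omega
        simp only [hA, hB, hC, hjs, if_true, hnle, hnle', hne, if_false]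
        nlinarith [hπj, hDnn]
    · simp only [hA, hB, hC, hjs, if_false]
      by_cases hne : j = k+1 <;> simp [hne]
      positivity
  calc ∑' j, (A j - B j - Cc j)
      ≤ ∑' j, (if j = k+1 then ((k:ℝ)+1) * π (k+1) else 0) := by
        apply Summable.tsum_le_tsum bound ((sumA.sub sumB).sub sumC)
        exact summable_of_ne_finset_zero (s := {k+1}) (fun j hj => by
          simp only [Finset.mem_singleton] at hj; simp [hj])
    _ = ((k:ℝ)+1) * π (k+1) := tsum_ite_eq (k+1) _


lemma steing_add_compl {lam : ℝ} (hl : 0 < lam) (s : Set ℕ) (K : ℕ) :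
    steing lam s K + steing lam sᶜ K = 0 := by
  cases K with
  | zero => show (0:ℝ) + 0 = 0; ring
  | succ k =>
      rw [steing_succ, steing_succ, ← add_div]
      have h1 := pU_add_compl lam s k
      have h2 := pT_add_compl lam s hl.le
      have : Real.exp lam * (k.factorial : ℝ) *
            (pU lam s k - pT lam s * pU lam Set.univ k)
          + Real.exp lam * (k.factorial : ℝ) *
            (pU lam sᶜ k - pT lam sᶜ * pU lam Set.univ k) = 0 := by
        linear_combination (Real.exp lam * (k.factorial : ℝ)) * h1
          - (Real.exp lam * (k.factorial : ℝ) * pU lam Set.univ k) * h2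
      rw [this, zero_div]

lemma steing_compl {lam : ℝ} (hl : 0 < lam) (s : Set ℕ) (K : ℕ) :
    steing lam sᶜ K = - steing lam s K := by
  have := steing_add_compl hl s K; linarith

lemma steing_diff_le {lam : ℝ} (hl : 0 < lam) (s : Set ℕ) (k : ℕ) :
    steing lam s (k+2) - steing lam s (k+1) ≤ 1/lam := by
  have hl0 : lam ≠ 0 := ne_of_gt hl
  have hfac : (((k+1).factorial : ℕ) : ℝ) = ((k:ℝ)+1) * (k.factorial : ℝ) := by
    rw [Nat.factorial_succ]; push_cast; ring
  have hpne : lam ^ (k+1) ≠ 0 := pow_ne_zero _ hl0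
  have hCpos : (0:ℝ) < Real.exp lam * (k.factorial : ℝ) / lam^(k+2) := by positivity
  have hdiff : steing lam s (k+2) - steing lam s (k+1)
      = (Real.exp lam * (k.factorial : ℝ) / lam^(k+2)) *
        (((k:ℝ)+1) * pU lam s (k+1) - lam * pU lam s k
          - pT lam s * (((k:ℝ)+1) * pU lam Set.univ (k+1) - lam * pU lam Set.univ k)) := by
    rw [show k+2 = (k+1)+1 from rfl, steing_succ lam s (k+1), steing_succ lam s k, hfac]
    have hpow : lam ^ (k+1+1) = lam ^ (k+1) * lam := by ring
    rw [hpow]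
    field_simp
    ring
  have hkey : (Real.exp lam * (k.factorial : ℝ) / lam^(k+2)) *
      (((k:ℝ)+1) * poissonPmf lam (k+1)) = 1/lam := by
    have h2 := key_pois hl0 (k+1)
    rw [hfac] at h2
    have hpow : lam ^ (k+2) = lam ^ (k+1) * lam := by ring
    have h3 : Real.exp lam * (((k:ℝ)+1) * (k.factorial : ℝ)) * poissonPmf lam (k+1)
        = lam^(k+1) := by rwa [div_eq_one_iff_eq hpne] at h2
    rw [hpow, div_mul_eq_mul_div, div_eq_div_iff (mul_ne_zero hpne hl0) hl0]
    linear_combination lam * h3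
  rw [hdiff, ← hkey]
  exact mul_le_mul_of_nonneg_left (W_est hl s k) hCpos.le

lemma steing_diff_abs {lam : ℝ} (hl : 0 < lam) (s : Set ℕ) (k : ℕ) :
    |steing lam s (k+2) - steing lam s (k+1)| ≤ 1/lam := by
  rw [abs_le]
  constructor
  · have h := steing_diff_le hl sᶜ k
    rw [steing_compl hl s (k+2), steing_compl hl s (k+1)] at h
    linarith
  · exact steing_diff_le hl s k


/-! ### Binomial facts -/

lemma binom_nonneg {m : ℕ} {q : ℝ} (h0 : 0 ≤ q) (h1 : q ≤ 1) (t : ℕ) :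
    0 ≤ binomPmf m q t := by
  have : 0 ≤ 1 - q := by linarith
  unfold binomPmf; positivity

lemma binom_zero_of_lt {m t : ℕ} (h : m < t) (q : ℝ) : binomPmf m q t = 0 := by
  simp [binomPmf, Nat.choose_eq_zero_of_lt h]

lemma summable_binom (m : ℕ) (q : ℝ) : Summable (binomPmf m q) :=
  summable_of_ne_finset_zero (s := Finset.range (m+1)) fun t ht =>
    binom_zero_of_lt (by simpa using ht) q

lemma sum_binom (M : ℕ) (q : ℝ) : ∑ t ∈ Finset.range (M+1), binomPmf M q t = 1 := by
  have h := add_pow q (1-q) M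
  have hq : q + (1-q) = (1:ℝ) := by ring
  rw [hq, one_pow] at h
  calc ∑ t ∈ Finset.range (M+1), binomPmf M q t
      = ∑ t ∈ Finset.range (M+1), q^t * (1-q)^(M-t) * (M.choose t : ℝ) :=
        Finset.sum_congr rfl (fun t _ => by unfold binomPmf; ring)
    _ = 1 := h.symm

lemma binom_succ_mul (a : ℕ) (q : ℝ) (t : ℕ) :
    ((t:ℝ)+1) * binomPmf (a+1) q (t+1) = (((a:ℝ)+1) * q) * binomPmf a q t := by
  have hch : (((a:ℝ)+1) * (a.choose t : ℝ)) = ((a+1).choose (t+1) : ℝ) * ((t:ℝ)+1) := by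
    exact_mod_cast congrArg (Nat.cast (R := ℝ)) (Nat.add_one_mul_choose_eq a t)
  unfold binomPmf
  rw [show a + 1 - (t+1) = a - t from by omega, pow_succ]
  calc ((t:ℝ)+1) * ((((a+1).choose (t+1)) : ℝ) * (q^t * q) * (1-q)^(a-t))
      = ((((a+1).choose (t+1)) : ℝ) * ((t:ℝ)+1)) * (q^t * q) * (1-q)^(a-t) := by ring
    _ = (((a:ℝ)+1) * (a.choose t : ℝ)) * (q^t * q) * (1-q)^(a-t) := by rw [hch]
    _ = ((a:ℝ)+1) * q * ((a.choose t : ℝ) * q^t * (1-q)^(a-t)) := by ring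

lemma binom_pascal (a : ℕ) (q : ℝ) (t : ℕ) :
    binomPmf (a+1) q (t+1) = (1-q) * binomPmf a q (t+1) + q * binomPmf a q t := by
  have hch : (((a+1).choose (t+1)) : ℝ) = (a.choose t : ℝ) + (a.choose (t+1) : ℝ) := by
    exact_mod_cast congrArg (Nat.cast (R := ℝ)) (Nat.choose_succ_succ a t)
  unfold binomPmf
  rw [show a + 1 - (t+1) = a - t from by omega, hch]
  by_cases hc : t + 1 ≤ a
  · obtain ⟨u, rfl⟩ : ∃ u, a = t + 1 + u := ⟨a - (t+1), by omega⟩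
    rw [show t + 1 + u - (t+1) = u from by omega, show t + 1 + u - t = u + 1 from by omega,
      pow_succ, pow_succ]
    ring
  · rw [Nat.choose_eq_zero_of_lt (show a < t + 1 from by omega), show a - (t+1) = 0 from by omega]
    rw [pow_succ]
    push_cast
    ring

lemma binom_zero_succ (a : ℕ) (q : ℝ) :
    binomPmf (a+1) q 0 = (1-q) * binomPmf a q 0 := by
  unfold binomPmf
  simp [pow_succ]
  ring


lemma natTV_binom_pois {m : ℕ} (hm : 1 ≤ m) {q : ℝ} (hq : 0 < q) (h1 : q ≤ 1) :
    natTV (binomPmf m q) (poissonPmf ((m:ℝ) * q)) ≤ q := by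
  obtain ⟨a, rfl⟩ : ∃ a, m = a + 1 := ⟨m - 1, by omega⟩
  set lam := ((a+1 : ℕ):ℝ) * q with hlam
  have hlpos : 0 < lam := by
    have : (0:ℝ) < ((a+1:ℕ):ℝ) := by positivity
    positivity
  apply ciSup_le
  intro s
  set g := steing lam s with hg
  set b := binomPmf (a+1) q with hb
  set b' := binomPmf a q with hb'
  have hPois : (∑' t : ℕ, if t ∈ s then poissonPmf lam t else 0) = pT lam s := rfl
  have hBin : (∑' t : ℕ, if t ∈ s then b t else 0)
      = ∑ t ∈ Finset.range (a+2), (if t ∈ s then b t else 0) := by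
    apply tsum_eq_sum
    intro t ht
    rw [Finset.mem_range] at ht
    rw [hb, binom_zero_of_lt (by omega) q]
    simp
  set SS1 := ∑ t ∈ Finset.range (a+1), b' t * g (t+1) with hS1
  set SS2 := ∑ t ∈ Finset.range (a+1), b' t * g (t+2) with hS2
  have key : ∑ t ∈ Finset.range (a+2), (if t ∈ s then b t else 0) - pT lam s
      = lam * q * (SS2 - SS1) := by
    have hsum : ∑ t ∈ Finset.range (a+2), b t = 1 := sum_binom (a+1) q
    have e1 : ∑ t ∈ Finset.range (a+2), (if t ∈ s then b t else 0) - pT lam s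
        = ∑ t ∈ Finset.range (a+2), b t * ((if t ∈ s then (1:ℝ) else 0) - pT lam s) := by
      calc ∑ t ∈ Finset.range (a+2), (if t ∈ s then b t else 0) - pT lam s
          = ∑ t ∈ Finset.range (a+2), b t * (if t ∈ s then (1:ℝ) else 0)
            - (∑ t ∈ Finset.range (a+2), b t) * pT lam s := by
            rw [hsum, one_mul]
            congr 1
            exact Finset.sum_congr rfl (fun t _ => by by_cases h : t ∈ s <;> simp [h])
        _ = _ := by
            rw [Finset.sum_mul, ← Finset.sum_sub_distrib]
            exact Finset.sum_congr rfl (fun t _ => by ring)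
    rw [e1]
    rw [Finset.sum_congr rfl (fun t _ => by rw [(stein_eq hlpos s t).symm])]
    have hfirst : ∑ t ∈ Finset.range (a+2), b t * (lam * g (t+1) - (t:ℝ) * g t)
        = lam * (∑ t ∈ Finset.range (a+2), b t * g (t+1))
          - ∑ t ∈ Finset.range (a+2), (t:ℝ) * b t * g t := by
      rw [Finset.mul_sum, ← Finset.sum_sub_distrib]
      exact Finset.sum_congr rfl (fun t _ => by ring)
    rw [hfirst]
    have hsecond : ∑ t ∈ Finset.range (a+2), (t:ℝ) * b t * g t = lam * SS1 := by
      rw [Finset.sum_range_succ' (fun t => (t:ℝ) * b t * g t) (a+1)]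
      simp only [Nat.cast_zero, zero_mul, add_zero]
      rw [hS1, Finset.mul_sum]
      apply Finset.sum_congr rfl
      intro i _
      have h := binom_succ_mul a q i
      calc ((i+1:ℕ):ℝ) * b (i+1) * g (i+1)
          = (((i:ℝ)+1) * binomPmf (a+1) q (i+1)) * g (i+1) := by rw [hb]; push_cast; ring
        _ = (((a:ℝ)+1) * q * b' i) * g (i+1) := by rw [h, hb']
        _ = lam * (b' i * g (i+1)) := by rw [hlam]; push_cast; ring
    rw [hsecond]
    have hX1 : ∑ t ∈ Finset.range (a+2), b' t * g (t+1)
        = (∑ i ∈ Finset.range (a+1), b' (i+1) * g (i+2)) + b' 0 * g 1 :=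
      Finset.sum_range_succ' (fun t => b' t * g (t+1)) (a+1)
    have hX2 : ∑ t ∈ Finset.range (a+2), b' t * g (t+1) = SS1 := by
      rw [Finset.sum_range_succ, hb', binom_zero_of_lt (by omega) q, zero_mul, add_zero, hS1]
    have hthird : ∑ t ∈ Finset.range (a+2), b t * g (t+1) = (1-q) * SS1 + q * SS2 := by
      rw [Finset.sum_range_succ' (fun t => b t * g (t+1)) (a+1)]
      have hpas : ∀ i, b (i+1) * g (i+1+1)
          = (1-q) * (b' (i+1) * g (i+2)) + q * (b' i * g (i+2)) := by
        intro i
        rw [hb, binom_pascal a q i, hb']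
        ring
      rw [Finset.sum_congr rfl (fun i _ => hpas i), Finset.sum_add_distrib]
      have hzero : b 0 * g (0+1) = (1-q) * (b' 0 * g 1) := by
        rw [hb, binom_zero_succ a q, hb']; ring
      rw [hzero]
      have : (1-q) * SS1 = (1-q) * ((∑ i ∈ Finset.range (a+1), b' (i+1) * g (i+2)) + b' 0 * g 1) := by
        rw [← hX1, hX2]
      rw [this, hS2, ← Finset.mul_sum, ← Finset.mul_sum]
      ring
    rw [hthird]
    ring
  rw [hPois, hBin, key]
  have hSbound : |SS2 - SS1| ≤ 1/lam := by
    rw [hS1, hS2, ← Finset.sum_sub_distrib]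
    calc |∑ t ∈ Finset.range (a+1), (b' t * g (t+2) - b' t * g (t+1))|
        ≤ ∑ t ∈ Finset.range (a+1), |b' t * g (t+2) - b' t * g (t+1)| :=
          Finset.abs_sum_le_sum_abs _ _
      _ ≤ ∑ t ∈ Finset.range (a+1), b' t * (1/lam) := by
          apply Finset.sum_le_sum
          intro t _
          rw [show b' t * g (t+2) - b' t * g (t+1) = b' t * (g (t+2) - g (t+1)) from by ring,
            abs_mul, abs_of_nonneg (binom_nonneg hq.le h1 t)]
          exact mul_le_mul_of_nonneg_left (steing_diff_abs hlpos s t)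
            (binom_nonneg hq.le h1 t)
      _ = 1/lam := by
          rw [← Finset.sum_mul, sum_binom a q, one_mul]
  calc |lam * q * (SS2 - SS1)| = lam * q * |SS2 - SS1| := by
        rw [abs_mul, abs_of_nonneg (by positivity)]
    _ ≤ lam * q * (1/lam) := mul_le_mul_of_nonneg_left hSbound (by positivity)
    _ = q := by field_simp

end GB

namespace GB2
open Finset GB

variable {n : ℕ}

lemma NE_pos (hn : 2 ≤ n) : 0 < Fintype.card {e : Sym2 (Fin n) // ¬ e.IsDiag} := by
  rw [Sym2.card_subtype_not_diag, Fintype.card_fin]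
  exact Nat.choose_pos hn

lemma gstarGiven_nonneg (n t : ℕ) (G : SimpleGraph (Fin n)) : 0 ≤ gstarGiven n t G := by
  unfold gstarGiven
  apply div_nonneg
  · apply Finset.sum_nonneg
    intro f _
    by_cases h : SimpleGraph.fromEdgeSet (Set.range (fun i => (f i : Sym2 (Fin n)))) = G <;>
      simp [h]
  · positivity

lemma gstarGiven_sum (hn : 2 ≤ n) (t : ℕ) :
    ∑ G : SimpleGraph (Fin n), gstarGiven n t G = 1 := by
  unfold gstarGiven
  rw [← Finset.sum_div]
  rw [Finset.sum_comm]
  have h1 : ∀ f : Fin t → {e : Sym2 (Fin n) // ¬ e.IsDiag},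
      ∑ G : SimpleGraph (Fin n),
        (if SimpleGraph.fromEdgeSet (Set.range (fun i => (f i : Sym2 (Fin n)))) = G
          then (1:ℝ) else 0) = 1 := by
    intro f
    rw [Finset.sum_ite_eq Finset.univ
      (SimpleGraph.fromEdgeSet (Set.range (fun i => (f i : Sym2 (Fin n))))) (fun _ => (1:ℝ))]
    simp
  rw [Finset.sum_congr rfl (fun f _ => h1 f)]
  rw [Finset.sum_const, Finset.card_univ, Fintype.card_fun, Fintype.card_fin]
  have hpos : (0:ℝ) < (Fintype.card {e : Sym2 (Fin n) // ¬ e.IsDiag} : ℝ) := by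
    exact_mod_cast NE_pos hn
  rw [nsmul_eq_mul, mul_one]
  push_cast
  rw [div_self (by positivity)]

lemma gstarGiven_le_one (hn : 2 ≤ n) (t : ℕ) (G : SimpleGraph (Fin n)) :
    gstarGiven n t G ≤ 1 := by
  rw [← gstarGiven_sum hn t]
  exact Finset.single_le_sum (fun G _ => gstarGiven_nonneg n t G) (Finset.mem_univ G)

/-- the probability that `G*(t)` lands in the set `A` -/
def cA (n : ℕ) (A : Set (SimpleGraph (Fin n))) (t : ℕ) : ℝ :=
  ∑ G : SimpleGraph (Fin n), (if G ∈ A then gstarGiven n t G else 0)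

lemma cA_nonneg (n : ℕ) (A : Set (SimpleGraph (Fin n))) (t : ℕ) : 0 ≤ cA n A t :=
  Finset.sum_nonneg fun G _ => by
    by_cases h : G ∈ A <;> simp [h, gstarGiven_nonneg]

lemma cA_le_one (hn : 2 ≤ n) (A : Set (SimpleGraph (Fin n))) (t : ℕ) : cA n A t ≤ 1 := by
  rw [← gstarGiven_sum hn t]
  apply Finset.sum_le_sum
  intro G _
  by_cases h : G ∈ A <;> simp [h, gstarGiven_nonneg]

lemma summable_mul_cA (hn : 2 ≤ n) {μ : ℕ → ℝ} (hμ : Summable μ)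
    (c : ℕ → ℝ) (hc0 : ∀ t, 0 ≤ c t) (hc1 : ∀ t, c t ≤ 1) :
    Summable (fun t => μ t * c t) := by
  apply Summable.of_norm_bounded hμ.abs
  intro t
  rw [Real.norm_eq_abs, abs_mul]
  calc |μ t| * |c t| ≤ |μ t| * 1 := by
        apply mul_le_mul_of_nonneg_left _ (abs_nonneg _)
        rw [abs_of_nonneg (hc0 t)]
        exact hc1 t
    _ = |μ t| := mul_one _

lemma sum_gstarDist_eq (hn : 2 ≤ n) {μ : ℕ → ℝ} (hμ : Summable μ)
    (A : Set (SimpleGraph (Fin n))) :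
    ∑ G : SimpleGraph (Fin n), (if G ∈ A then gstarDist n μ G else 0)
      = ∑' t, μ t * cA n A t := by
  have h1 : ∀ G : SimpleGraph (Fin n), (if G ∈ A then gstarDist n μ G else 0)
      = ∑' t, μ t * (if G ∈ A then gstarGiven n t G else 0) := by
    intro G
    by_cases h : G ∈ A
    · simp only [h, if_true]
      rfl
    · simp [h]
  have hsummable : ∀ G ∈ (Finset.univ : Finset (SimpleGraph (Fin n))),
      Summable (fun t => μ t * (if G ∈ A then gstarGiven n t G else 0)) := by
    intro G _
    apply summable_mul_cA hn hμ
    · intro t; by_cases h : G ∈ A <;> simp [h, gstarGiven_nonneg]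
    · intro t; by_cases h : G ∈ A <;> simp [h, gstarGiven_le_one hn, gstarGiven_nonneg]
  rw [Finset.sum_congr rfl (fun G _ => h1 G), ← Summable.tsum_finsetSum hsummable]
  congr 1
  funext t
  rw [cA, Finset.mul_sum]


lemma summable_ite_set {μ : ℕ → ℝ} (hμ : Summable μ) (s : Set ℕ) :
    Summable (fun t => if t ∈ s then μ t else 0) := by
  have : (fun t => if t ∈ s then μ t else 0) = s.indicator μ := by
    funext t; rw [Set.indicator_apply]
  rw [this]
  exact hμ.indicator s

lemma abs_tsum_ite_le {μ : ℕ → ℝ} (hμ : Summable μ) (s : Set ℕ) :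
    |∑' t, (if t ∈ s then μ t else 0)| ≤ ∑' t, |μ t| := by
  have h1 : ‖∑' t, (if t ∈ s then μ t else 0)‖ ≤ ∑' t, ‖(if t ∈ s then μ t else 0)‖ :=
    norm_tsum_le_tsum_norm (by
      apply Summable.of_nonneg_of_le (fun t => norm_nonneg _) (fun t => ?_) hμ.abs
      rw [Real.norm_eq_abs]
      by_cases h : t ∈ s <;> simp [h, abs_nonneg])
  rw [Real.norm_eq_abs] at h1
  apply h1.trans
  apply Summable.tsum_le_tsum _ _ hμ.abs
  · intro t
    rw [Real.norm_eq_abs]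
    by_cases h : t ∈ s <;> simp [h, abs_nonneg]
  · apply Summable.of_nonneg_of_le (fun t => norm_nonneg _) (fun t => ?_) hμ.abs
    rw [Real.norm_eq_abs]
    by_cases h : t ∈ s <;> simp [h, abs_nonneg]

lemma natTV_bddAbove {μ ν : ℕ → ℝ} (hμ : Summable μ) (hν : Summable ν) :
    BddAbove (Set.range fun s : Set ℕ =>
      |(∑' t : ℕ, if t ∈ s then μ t else 0) - (∑' t : ℕ, if t ∈ s then ν t else 0)|) := by
  refine ⟨(∑' t, |μ t|) + (∑' t, |ν t|), ?_⟩
  rintro x ⟨s, rfl⟩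
  calc |(∑' t : ℕ, if t ∈ s then μ t else 0) - (∑' t : ℕ, if t ∈ s then ν t else 0)|
      ≤ |(∑' t : ℕ, if t ∈ s then μ t else 0)| + |(∑' t : ℕ, if t ∈ s then ν t else 0)| :=
        abs_sub _ _
    _ ≤ (∑' t, |μ t|) + (∑' t, |ν t|) :=
        add_le_add (abs_tsum_ite_le hμ s) (abs_tsum_ite_le hν s)

lemma tsum_abs_sub_le_two_natTV {μ ν : ℕ → ℝ} (hμ : Summable μ) (hν : Summable ν) :
    ∑' t, |μ t - ν t| ≤ 2 * natTV μ ν := by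
  obtain ⟨s, hs⟩ : ∃ s : Set ℕ, s = {t | ν t ≤ μ t} := ⟨_, rfl⟩
  obtain ⟨s2, hs2⟩ : ∃ s2 : Set ℕ, s2 = {t | ¬ (ν t ≤ μ t)} := ⟨_, rfl⟩
  have hsum1 : Summable (fun t => if t ∈ s then μ t - ν t else 0) :=
    summable_ite_set (hμ.sub hν) s
  have hsum2 : Summable (fun t => if t ∈ s2 then ν t - μ t else 0) :=
    summable_ite_set (hν.sub hμ) s2
  have hpoint : ∀ t, |μ t - ν t| = (if t ∈ s then μ t - ν t else 0)
      + (if t ∈ s2 then ν t - μ t else 0) := by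
    intro t
    by_cases h : ν t ≤ μ t
    · have h1 : t ∈ s := by rw [hs]; exact h
      have h2 : t ∉ s2 := by rw [hs2]; exact fun hc => hc h
      rw [if_pos h1, if_neg h2, add_zero, abs_of_nonneg (by linarith)]
    · have h1 : t ∉ s := by rw [hs]; exact h
      have h2 : t ∈ s2 := by rw [hs2]; exact h
      rw [if_neg h1, if_pos h2, zero_add, abs_of_neg (by linarith)]
      ring
  calc ∑' t, |μ t - ν t|
      = (∑' t, (if t ∈ s then μ t - ν t else 0))
        + (∑' t, (if t ∈ s2 then ν t - μ t else 0)) := by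
        rw [← Summable.tsum_add hsum1 hsum2]
        exact tsum_congr hpoint
    _ ≤ natTV μ ν + natTV μ ν := by
        apply add_le_add
        · have heq : ∑' t, (if t ∈ s then μ t - ν t else 0)
              = (∑' t, (if t ∈ s then μ t else 0)) - (∑' t, (if t ∈ s then ν t else 0)) := by
            rw [← Summable.tsum_sub (summable_ite_set hμ s) (summable_ite_set hν s)]
            apply tsum_congr
            intro t
            by_cases h : t ∈ s <;> simp [h]
          rw [heq]
          calc (∑' t, (if t ∈ s then μ t else 0)) - (∑' t, (if t ∈ s then ν t else 0))
              ≤ |(∑' t, (if t ∈ s then μ t else 0)) - (∑' t, (if t ∈ s then ν t else 0))| :=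
                le_abs_self _
            _ ≤ natTV μ ν := le_ciSup (natTV_bddAbove hμ hν) s
        · have heq : ∑' t, (if t ∈ s2 then ν t - μ t else 0)
              = (∑' t, (if t ∈ s2 then ν t else 0)) - (∑' t, (if t ∈ s2 then μ t else 0)) := by
            rw [← Summable.tsum_sub (summable_ite_set hν s2) (summable_ite_set hμ s2)]
            apply tsum_congr
            intro t
            by_cases h : t ∈ s2 <;> simp [h]
          rw [heq]
          calc (∑' t, (if t ∈ s2 then ν t else 0)) - (∑' t, (if t ∈ s2 then μ t else 0))
              ≤ |(∑' t, (if t ∈ s2 then μ t else 0)) - (∑' t, (if t ∈ s2 then ν t else 0))| := by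
                rw [abs_sub_comm]
                exact le_abs_self _
            _ ≤ natTV μ ν := le_ciSup (natTV_bddAbove hμ hν) s2
    _ = 2 * natTV μ ν := by ring

lemma graphTV_gstar_le (hn : 2 ≤ n) {μ ν : ℕ → ℝ} (hμ : Summable μ) (hν : Summable ν) :
    graphTV (gstarDist n μ) (gstarDist n ν) ≤ 2 * natTV μ ν := by
  apply ciSup_le
  intro A
  rw [sum_gstarDist_eq hn hμ A, sum_gstarDist_eq hn hν A]
  have hc0 := cA_nonneg n A
  have hc1 := cA_le_one hn A
  have hμc : Summable (fun t => μ t * cA n A t) := summable_mul_cA hn hμ _ hc0 hc1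
  have hνc : Summable (fun t => ν t * cA n A t) := summable_mul_cA hn hν _ hc0 hc1
  have hdiff : (∑' t, μ t * cA n A t) - (∑' t, ν t * cA n A t)
      = ∑' t, (μ t - ν t) * cA n A t := by
    rw [← Summable.tsum_sub hμc hνc]
    apply tsum_congr
    intro t
    ring
  rw [hdiff]
  have habs : Summable (fun t => (μ t - ν t) * cA n A t) := by
    have := hμc.sub hνc
    apply Summable.congr this
    intro t
    ring
  calc |∑' t, (μ t - ν t) * cA n A t|
      ≤ ∑' t, ‖(μ t - ν t) * cA n A t‖ := by
        rw [← Real.norm_eq_abs]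
        exact norm_tsum_le_tsum_norm habs.norm
    _ ≤ ∑' t, |μ t - ν t| := by
        apply Summable.tsum_le_tsum _ habs.norm ((hμ.sub hν).abs)
        intro t
        rw [Real.norm_eq_abs, abs_mul]
        calc |μ t - ν t| * |cA n A t| ≤ |μ t - ν t| * 1 := by
              apply mul_le_mul_of_nonneg_left _ (abs_nonneg _)
              rw [abs_of_nonneg (hc0 t)]
              exact hc1 t
          _ = |μ t - ν t| := mul_one _
    _ ≤ 2 * natTV μ ν := tsum_abs_sub_le_two_natTV hμ hν

end GB2

namespace GA
open Finset GB GB2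

variable {n : ℕ}

abbrev ES (n : ℕ) := {e : Sym2 (Fin n) // ¬ e.IsDiag}

/-- number of sample sequences of length `t` whose set of sampled pairs is exactly `r` -/
def cnt (n : ℕ) (r : Finset (ES n)) (t : ℕ) : ℕ :=
  (Finset.univ.filter (fun f : Fin t → ES n => Finset.image f Finset.univ = r)).card

/-- the edge set of `G` as a finset of non-diagonal pairs -/
def sG (G : SimpleGraph (Fin n)) : Finset (ES n) :=
  Finset.univ.filter (fun e : ES n => (e : Sym2 (Fin n)) ∈ G.edgeSet)

lemma cond_iff (G : SimpleGraph (Fin n)) {t : ℕ} (f : Fin t → ES n) :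
    SimpleGraph.fromEdgeSet (Set.range (fun i => (f i : Sym2 (Fin n)))) = G
      ↔ Finset.image f Finset.univ = sG G := by
  have step1 : SimpleGraph.fromEdgeSet (Set.range (fun i => (f i : Sym2 (Fin n)))) = G
      ↔ Set.range (fun i => (f i : Sym2 (Fin n))) = G.edgeSet := by
    constructor
    · intro h
      have h2 := congrArg SimpleGraph.edgeSet h
      rw [SimpleGraph.edgeSet_fromEdgeSet] at h2
      rw [← h2]
      ext x
      simp only [Set.mem_diff, Set.mem_setOf_eq, Set.mem_range, iff_self_and]
      rintro ⟨i, rfl⟩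
      exact (f i).2
    · intro h
      rw [h, SimpleGraph.fromEdgeSet_edgeSet]
  rw [step1]
  constructor
  · intro h
    ext e
    rw [Finset.mem_image, sG, Finset.mem_filter]
    constructor
    · rintro ⟨i, _, rfl⟩
      refine ⟨Finset.mem_univ _, ?_⟩
      rw [← h]
      exact ⟨i, rfl⟩
    · rintro ⟨-, he⟩
      rw [← h] at he
      obtain ⟨i, hi⟩ := he
      exact ⟨i, Finset.mem_univ _, Subtype.ext hi⟩
  · intro h
    ext x
    constructor
    · rintro ⟨i, rfl⟩
      have : f i ∈ Finset.image f Finset.univ := Finset.mem_image_of_mem f (Finset.mem_univ i)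
      rw [h, sG, Finset.mem_filter] at this
      exact this.2
    · intro hx
      have hnd : ¬ x.IsDiag := SimpleGraph.not_isDiag_of_mem_edgeSet G hx
      have : (⟨x, hnd⟩ : ES n) ∈ sG G := by
        rw [sG, Finset.mem_filter]
        exact ⟨Finset.mem_univ _, hx⟩
      rw [← h, Finset.mem_image] at this
      obtain ⟨i, -, hi⟩ := this
      exact ⟨i, congrArg Subtype.val hi⟩

lemma gstarGiven_eq (G : SimpleGraph (Fin n)) (t : ℕ) :
    gstarGiven n t G = (cnt n (sG G) t : ℝ) / (Fintype.card (ES n) : ℝ)^t := by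
  unfold gstarGiven
  congr 1
  rw [Finset.sum_congr rfl (fun f _ => if_congr (cond_iff G f) rfl rfl)]
  rw [Finset.sum_boole, cnt]

lemma count_le (r : Finset (ES n)) (t : ℕ) :
    (Finset.univ.filter (fun f : Fin t → ES n => Finset.image f Finset.univ ⊆ r)).card
      = r.card ^ t := by
  have heq : Finset.univ.filter (fun f : Fin t → ES n => Finset.image f Finset.univ ⊆ r)
      = Fintype.piFinset (fun _ : Fin t => r) := by
    ext f
    simp only [Finset.mem_filter, Finset.mem_univ, true_and, Fintype.mem_piFinset,
      Finset.image_subset_iff]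
    tauto
  rw [heq, Fintype.card_piFinset]
  simp

lemma count_partition (r : Finset (ES n)) (t : ℕ) :
    ∑ u ∈ r.powerset, cnt n u t = r.card ^ t := by
  rw [← count_le r t]
  rw [Finset.card_eq_sum_card_fiberwise
    (f := fun f : Fin t → ES n => Finset.image f Finset.univ)
    (t := r.powerset) (fun f hf => by
      rw [Finset.mem_coe, Finset.mem_filter] at hf
      rw [Finset.mem_coe, Finset.mem_powerset]
      exact hf.2)]
  apply Finset.sum_congr rfl
  intro u hu
  rw [Finset.mem_powerset] at hu
  rw [cnt]
  congr 1
  rw [Finset.filter_filter]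
  ext f
  simp only [Finset.mem_filter, Finset.mem_univ, true_and]
  constructor
  · intro hQ; exact ⟨by rw [hQ]; exact hu, hQ⟩
  · intro h; exact h.2

lemma cnt_le_card (r : Finset (ES n)) (t : ℕ) : cnt n r t ≤ (Fintype.card (ES n))^t := by
  calc cnt n r t ≤ (Finset.univ : Finset (Fin t → ES n)).card := Finset.card_filter_le _ _
    _ = (Fintype.card (ES n))^t := by rw [Finset.card_univ, Fintype.card_fun]; simp

/-- the probability that the multiset of Poisson many samples covers exactly `r` -/
def phiEx (lam : ℝ) (r : Finset (ES n)) : ℝ :=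
  ∑' t, poissonPmf lam t * ((cnt n r t : ℝ) / (Fintype.card (ES n) : ℝ)^t)

lemma summable_phiEx {lam : ℝ} (hlam : 0 ≤ lam) (hn : 2 ≤ n) (r : Finset (ES n)) :
    Summable (fun t => poissonPmf lam t * ((cnt n r t : ℝ) / (Fintype.card (ES n) : ℝ)^t)) := by
  have hN : (0:ℝ) < (Fintype.card (ES n) : ℝ) := by exact_mod_cast NE_pos hn
  apply Summable.of_nonneg_of_le (fun t => ?_) (fun t => ?_) (summable_pois lam)
  · have := pois_nonneg hlam t
    positivity
  · have h1 : (cnt n r t : ℝ) / (Fintype.card (ES n) : ℝ)^t ≤ 1 := by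
      rw [div_le_one (by positivity)]
      exact_mod_cast cnt_le_card r t
    calc poissonPmf lam t * ((cnt n r t : ℝ) / (Fintype.card (ES n) : ℝ)^t)
        ≤ poissonPmf lam t * 1 := by
          apply mul_le_mul_of_nonneg_left h1 (pois_nonneg hlam t)
      _ = poissonPmf lam t := mul_one _

lemma tsum_pois_geom (lam y : ℝ) :
    ∑' t, poissonPmf lam t * y^t = Real.exp (-lam) * Real.exp (lam * y) := by
  have h := NormedSpace.expSeries_div_hasSum_exp (lam * y : ℝ)
  rw [← Real.exp_eq_exp_ℝ] at h
  have h2 := h.mul_left (Real.exp (-lam))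
  rw [← h2.tsum_eq]
  apply tsum_congr
  intro t
  rw [poissonPmf, mul_pow]
  field_simp

lemma sum_powerset_phiEx {lam : ℝ} (hlam : 0 ≤ lam) (hn : 2 ≤ n) (r : Finset (ES n)) :
    ∑ u ∈ r.powerset, phiEx lam u
      = Real.exp (-lam) * Real.exp (lam * ((r.card : ℝ) / (Fintype.card (ES n) : ℝ))) := by
  have hN : (0:ℝ) < (Fintype.card (ES n) : ℝ) := by exact_mod_cast NE_pos hn
  simp only [phiEx]
  rw [← Summable.tsum_finsetSum (fun u _ => summable_phiEx hlam hn u)]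
  rw [← tsum_pois_geom lam ((r.card : ℝ) / (Fintype.card (ES n) : ℝ))]
  apply tsum_congr
  intro t
  rw [← Finset.mul_sum, ← Finset.sum_div]
  rw [div_pow]
  congr 2
  exact_mod_cast congrArg (Nat.cast (R := ℝ)) (count_partition r t)

lemma phiEx_eq {lam : ℝ} (hlam : 0 ≤ lam) (hn : 2 ≤ n) (r : Finset (ES n)) :
    phiEx lam r = Real.exp (-lam)
      * (Real.exp (lam / (Fintype.card (ES n) : ℝ)) - 1)^r.card := by
  have hN : (0:ℝ) < (Fintype.card (ES n) : ℝ) := by exact_mod_cast NE_pos hn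
  induction r using Finset.strongInduction with
  | _ r IH =>
    set β := Real.exp (lam / (Fintype.card (ES n) : ℝ)) - 1 with hβ
    have hsplit : ∑ u ∈ r.powerset, phiEx lam u
        = phiEx lam r + ∑ u ∈ r.powerset.erase r, phiEx lam u :=
      (Finset.add_sum_erase _ _ (Finset.mem_powerset_self r)).symm
    have hIH : ∀ u ∈ r.powerset.erase r, phiEx lam u = Real.exp (-lam) * β^u.card := by
      intro u hu
      rw [Finset.mem_erase, Finset.mem_powerset] at hu
      exact IH u (HasSubset.Subset.ssubset_of_ne hu.2 hu.1)
    have hgeom : ∑ u ∈ r.powerset, Real.exp (-lam) * β^u.card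
        = Real.exp (-lam) * (1 + β)^r.card := by
      rw [← Finset.mul_sum]
      congr 1
      rw [Finset.sum_powerset_apply_card (fun j => β^j)]
      rw [add_comm (1:ℝ) β, add_pow β 1 r.card]
      apply Finset.sum_congr rfl
      intro j _
      rw [nsmul_eq_mul, one_pow]
      ring
    have hexp1 : (1 + β) = Real.exp (lam / (Fintype.card (ES n) : ℝ)) := by rw [hβ]; ring
    have hexp2 : (1 + β)^r.card
        = Real.exp (lam * ((r.card : ℝ) / (Fintype.card (ES n) : ℝ))) := by
      rw [hexp1, ← Real.exp_nat_mul]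
      congr 1
      ring
    have hsplit2 : ∑ u ∈ r.powerset, Real.exp (-lam) * β^u.card
        = Real.exp (-lam) * β^r.card + ∑ u ∈ r.powerset.erase r, Real.exp (-lam) * β^u.card :=
      (Finset.add_sum_erase _ _ (Finset.mem_powerset_self r)).symm
    have hmain := sum_powerset_phiEx hlam hn r
    rw [hsplit] at hmain
    rw [Finset.sum_congr rfl hIH] at hmain
    have h2 : Real.exp (-lam) * Real.exp (lam * ((r.card : ℝ) / (Fintype.card (ES n) : ℝ)))
        = Real.exp (-lam) * β^r.card + ∑ u ∈ r.powerset.erase r, Real.exp (-lam) * β^u.card := by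
      rw [← hexp2, ← hgeom, hsplit2]
    rw [h2] at hmain
    linarith


lemma card_sG (G : SimpleGraph (Fin n)) : G.edgeSet.ncard = (sG G).card := by
  rw [← SimpleGraph.coe_edgeFinset, Set.ncard_coe_finset]
  apply Finset.card_bij (fun (x : Sym2 (Fin n)) hx =>
    (⟨x, SimpleGraph.not_isDiag_of_mem_edgeSet G (SimpleGraph.mem_edgeFinset.mp hx)⟩ : ES n))
  · intro x hx
    rw [sG, Finset.mem_filter]
    exact ⟨Finset.mem_univ _, SimpleGraph.mem_edgeFinset.mp hx⟩
  · intro x hx y hy hxy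
    exact congrArg Subtype.val hxy
  · intro e he
    rw [sG, Finset.mem_filter] at he
    exact ⟨(e : Sym2 (Fin n)), SimpleGraph.mem_edgeFinset.mpr he.2, rfl⟩

lemma pois_eq_er (hn : 2 ≤ n) {lam : ℝ} (hlam : 0 ≤ lam) (G : SimpleGraph (Fin n)) :
    gstarDist n (poissonPmf lam) G
      = erDist n (1 - Real.exp (-(lam / (n.choose 2 : ℝ)))) G := by
  have hNnat : Fintype.card (ES n) = n.choose 2 := by
    rw [Sym2.card_subtype_not_diag, Fintype.card_fin]
  set N := (Fintype.card (ES n) : ℝ) with hN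
  have hNpos : (0:ℝ) < N := by rw [hN]; exact_mod_cast NE_pos hn
  set x := lam / N with hx
  set k := (sG G).card with hk
  have hkN : k ≤ Fintype.card (ES n) := Finset.card_le_univ _
  have h1 : gstarDist n (poissonPmf lam) G = Real.exp (-lam) * (Real.exp x - 1)^k := by
    have h2 := phiEx_eq hlam hn (sG G)
    rw [hk, hx, hN, ← h2]
    apply tsum_congr
    intro t
    rw [gstarGiven_eq]
  rw [h1, erDist, card_sG G]
  have hNC : ((n.choose 2 : ℕ) : ℝ) = N := by rw [hN, hNnat]
  have hxx : lam / ((n.choose 2 : ℕ) : ℝ) = x := by rw [hNC, hx]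
  rw [show (1 : ℝ) - (1 - Real.exp (-(lam / ((n.choose 2 : ℕ) : ℝ))))
      = Real.exp (-(lam/((n.choose 2 : ℕ) : ℝ))) from by ring, hxx]
  have hbeta : Real.exp x - 1 = Real.exp x * (1 - Real.exp (-x)) := by
    rw [mul_sub, ← Real.exp_add, add_neg_cancel, Real.exp_zero, mul_one]
  have hfact : Real.exp (-lam) * Real.exp x ^ k = Real.exp (-x) ^ (n.choose 2 - k) := by
    rw [← Real.exp_nat_mul, ← Real.exp_nat_mul, ← Real.exp_add]
    congr 1
    have hkc : k ≤ n.choose 2 := hNnat ▸ hkN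
    have hcast : ((n.choose 2 - k : ℕ) : ℝ) = N - (k:ℝ) := by
      rw [Nat.cast_sub hkc, hNC]
    rw [hcast]
    have hlamx : lam = x * N := by rw [hx]; field_simp
    rw [hlamx]
    ring
  calc Real.exp (-lam) * (Real.exp x - 1)^k
      = Real.exp (-lam) * Real.exp x ^ k * (1 - Real.exp (-x))^k := by
        rw [hbeta, mul_pow]; ring
    _ = (1 - Real.exp (-x))^k * Real.exp (-x) ^ (n.choose 2 - k) := by
        rw [hfact]; ring

end GA
/-- For `M₁ ~ Bin(m, q)` and `M₂ ~ Po(m q)`, the total variation distance between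
`G*(M₁)` and `G(n, 1 - exp(-m q / C(n,2)))` equals the total variation distance
between `G*(M₁)` and `G*(M₂)`, is at most `2 d_TV(M₁, M₂)`, and `2 d_TV(M₁, M₂) ≤ 2q`. -/
theorem gstar_binomial_poisson_tv (n m : ℕ) (hn : 2 ≤ n) (hm : 0 < m)
    (q : ℝ) (h0 : 0 ≤ q) (h1 : q ≤ 1) :
    graphTV (gstarDist n (binomPmf m q))
        (erDist n (1 - Real.exp (-((m : ℝ) * q / (n.choose 2 : ℝ)))))
      = graphTV (gstarDist n (binomPmf m q)) (gstarDist n (poissonPmf ((m : ℝ) * q))) ∧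
    graphTV (gstarDist n (binomPmf m q)) (gstarDist n (poissonPmf ((m : ℝ) * q)))
      ≤ 2 * natTV (binomPmf m q) (poissonPmf ((m : ℝ) * q)) ∧
    2 * natTV (binomPmf m q) (poissonPmf ((m : ℝ) * q)) ≤ 2 * q := by
  have hlam : 0 ≤ (m : ℝ) * q := by positivity
  refine ⟨?_, ?_, ?_⟩
  · have heq : erDist n (1 - Real.exp (-((m : ℝ) * q / (n.choose 2 : ℝ))))
        = gstarDist n (poissonPmf ((m : ℝ) * q)) :=
      funext fun G => (GA.pois_eq_er hn hlam G).symm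
    rw [heq]
  · exact GB2.graphTV_gstar_le hn (GB.summable_binom m q) (GB.summable_pois _)
  · rcases eq_or_lt_of_le h0 with hq | hq
    · subst hq
      have hfun : binomPmf m 0 = poissonPmf ((m:ℝ) * 0) := by
        funext t
        rw [mul_zero]
        cases t with
        | zero => simp [binomPmf, poissonPmf]
        | succ t => simp [binomPmf, poissonPmf]
      have hzero : natTV (binomPmf m 0) (poissonPmf ((m:ℝ) * 0)) = 0 := by
        rw [hfun]
        calc natTV (poissonPmf ((m:ℝ)*0)) (poissonPmf ((m:ℝ)*0))
            = ⨆ _ : Set ℕ, (0:ℝ) := by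
              unfold natTV
              congr
              funext s
              rw [sub_self, abs_zero]
          _ = 0 := ciSup_const
      rw [hzero]
    · have := GB.natTV_binom_pois (m := m) hm hq h1
      linarith
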